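/- arXiv:1506.05878 — 7 statements merged into one kernel-verified Lean document; each statement's English description precedes it below -/
import Mathlib

section
/- In the commutative ring R = ℤ[h,E]/⟨h⁴, h²E, E² − 2hE + h²⟩ (the quotient of the polynomial ring ℤ[h,E] in two variables by the ideal generated by h⁴, h²E, and E² − 2hE + h²), the element hE does not belong to the ideal of R generated by h³. -/
/-- The element `h` in `ℤ[h,E]`. -/
noncomputable def hGen : MvPolynomial (Fin 2) ℤ := MvPolynomial.X 0

/-- The element `E` in `ℤ[h,E]`. -/
noncomputable def EGen : MvPolynomial (Fin 2) ℤ := MvPolynomial.X 1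

/-- The ideal `⟨h⁴, h²E, E² − 2hE + h²⟩` of `ℤ[h,E]`. -/
noncomputable def relIdeal : Ideal (MvPolynomial (Fin 2) ℤ) :=
  Ideal.span {hGen ^ 4, hGen ^ 2 * EGen, EGen ^ 2 - 2 * hGen * EGen + hGen ^ 2}

/-- Evaluation `h ↦ 2, E ↦ 2` into `ZMod 8`. -/
noncomputable def ψ : MvPolynomial (Fin 2) ℤ →+* ZMod 8 :=
  MvPolynomial.eval₂Hom (Int.castRingHom (ZMod 8)) (fun _ => 2)

lemma ψ_hGen : ψ hGen = 2 := by
  simp [ψ, hGen]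

lemma ψ_EGen : ψ EGen = 2 := by
  simp [ψ, EGen]

lemma relIdeal_le_ker : relIdeal ≤ RingHom.ker ψ := by
  rw [relIdeal, Ideal.span_le]
  rintro x hx
  simp only [Set.mem_insert_iff, Set.mem_singleton_iff] at hx
  rcases hx with rfl | rfl | rfl <;>
    simp [RingHom.mem_ker, map_pow, map_mul, map_sub, map_add, ψ_hGen, ψ_EGen, map_ofNat] <;> decide

/-- In `R = ℤ[h,E]/⟨h⁴, h²E, E² − 2hE + h²⟩`, the element `hE` does not belong to
the ideal of `R` generated by `h³`. -/
theorem hE_not_in_span_h_cubed :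
    Ideal.Quotient.mk relIdeal (hGen * EGen) ∉
      Ideal.span {Ideal.Quotient.mk relIdeal (hGen ^ 3)} := by
  intro hmem
  rw [Ideal.mem_span_singleton] at hmem
  obtain ⟨c, hc⟩ := hmem
  obtain ⟨q, rfl⟩ := Ideal.Quotient.mk_surjective c
  rw [← map_mul, Ideal.Quotient.eq] at hc
  have h0 : ψ (hGen * EGen - hGen ^ 3 * q) = 0 := relIdeal_le_ker hc
  rw [map_sub, map_mul, map_mul, map_pow, ψ_hGen, ψ_EGen] at h0
  have : (2 : ZMod 8) * 2 - 2 ^ 3 * ψ q = 4 := by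
    have h8 : (2 : ZMod 8) ^ 3 = 0 := by decide
    rw [h8, zero_mul, sub_zero]; decide
  rw [this] at h0
  exact absurd h0 (by decide)
end

section
/- Let A be a commutative ring, let J_V, J_Z, J_{ZV} be ideals of A with J_V ⊆ J_{ZV} and J_Z ⊆ J_{ZV}, and let P ∈ A[t] be a polynomial. Set R = A[E]/I_R, where I_R is the ideal of the polynomial ring A[E] generated by {a·E : a ∈ J_Z} together with P(−E), and set S = (A/J_V)[E]/I_S, where I_S is the ideal of (A/J_V)[E] generated by {ā·E : ā the image in A/J_V of some a ∈ J_{ZV}} together with P̄(−E), P̄ denoting the image of P under the coefficient map A[t] → (A/J_V)[t]. Then the coefficient-reduction homomorphism A[E] → (A/J_V)[E] (sending E to E) descends to a surjective ring homomorphism R → S, and the kernel of this homomorphism is the ideal of R generated by the image of J_V together with the images of the elements {a·E : a ∈ J_{ZV}}. -/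
open Polynomial

set_option synthInstance.maxHeartbeats 1000000 in
/-- Corrected Lemma 5.4 (Fulton–MacPherson), ring-theoretic form.
Let `A` be a commutative ring, `J_V ⊆ J_{ZV}` and `J_Z ⊆ J_{ZV}` ideals of `A`,
and `P ∈ A[t]`.  Let `R = A[E]/⟨{a·E : a ∈ J_Z}, P(−E)⟩` and
`S = (A/J_V)[E]/⟨{ā·E : a ∈ J_{ZV}}, P̄(−E)⟩`.  Then the coefficient-reduction
map `A[E] → (A/J_V)[E]` descends to a surjective ring homomorphism `R → S`, whose
kernel is the ideal of `R` generated by the image of `J_V` together with the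
images of the elements `{a·E : a ∈ J_{ZV}}`. -/
theorem corrected_lemma_5_4 (A : Type*) [CommRing A]
    (JV JZ JZV : Ideal A) (hV : JV ≤ JZV) (hZ : JZ ≤ JZV) (P : Polynomial A)
    (IR : Ideal (Polynomial A))
    (hIR : IR = Ideal.span
      ({q : Polynomial A | ∃ a ∈ JZ, q = C a * X} ∪ {P.comp (-X)}))
    (IS : Ideal (Polynomial (A ⧸ JV)))
    (hIS : IS = Ideal.span
      ({q : Polynomial (A ⧸ JV) | ∃ a ∈ JZV, q = C (Ideal.Quotient.mk JV a) * X} ∪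
        {(P.map (Ideal.Quotient.mk JV)).comp (-X)})) :
    ∃ φ : (Polynomial A ⧸ IR) →+* (Polynomial (A ⧸ JV) ⧸ IS),
      (∀ q : Polynomial A,
          φ (Ideal.Quotient.mk IR q) =
            Ideal.Quotient.mk IS (q.map (Ideal.Quotient.mk JV))) ∧
      Function.Surjective φ ∧
      RingHom.ker φ = Ideal.span
        ({x : Polynomial A ⧸ IR | ∃ a ∈ JV, x = Ideal.Quotient.mk IR (C a)} ∪
          {x : Polynomial A ⧸ IR | ∃ a ∈ JZV, x = Ideal.Quotient.mk IR (C a * X)}) := by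
  classical
  set f : Polynomial A →+* Polynomial (A ⧸ JV) := mapRingHom (Ideal.Quotient.mk JV) with hf
  set ψ : Polynomial A →+* Polynomial (A ⧸ JV) ⧸ IS := (Ideal.Quotient.mk IS).comp f with hψ
  -- the image of P.comp (-X)
  have hPc : f (P.comp (-X)) = (P.map (Ideal.Quotient.mk JV)).comp (-X) := by
    simp [hf, Polynomial.map_comp]
  have hCX : ∀ a : A, f (C a * X) = C (Ideal.Quotient.mk JV a) * X := by
    intro a; simp [hf]
  have hle : ∀ q ∈ IR, ψ q = 0 := by
    have hsub : Ideal.span ({q : Polynomial A | ∃ a ∈ JZ, q = C a * X} ∪ {P.comp (-X)})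
        ≤ IS.comap f := by
      rw [Ideal.span_le]
      rintro r (⟨a, ha, rfl⟩ | rfl)
      · rw [SetLike.mem_coe, Ideal.mem_comap, hCX, hIS]
        exact Ideal.subset_span (Or.inl ⟨a, hZ ha, rfl⟩)
      · rw [SetLike.mem_coe, Ideal.mem_comap, hPc, hIS]
        exact Ideal.subset_span (Or.inr rfl)
    intro q hq
    rw [hIR] at hq
    have : f q ∈ IS := hsub hq
    simpa [hψ, Ideal.Quotient.eq_zero_iff_mem] using this
  refine ⟨Ideal.Quotient.lift IR ψ hle, ?_, ?_, ?_⟩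
  · intro q; exact Ideal.Quotient.lift_mk IR ψ hle
  · -- surjectivity
    have hψsurj : Function.Surjective ψ := by
      refine (Ideal.Quotient.mk_surjective).comp ?_
      exact Polynomial.map_surjective _ Ideal.Quotient.mk_surjective
    intro y
    obtain ⟨q, hq⟩ := hψsurj y
    exact ⟨Ideal.Quotient.mk IR q, hq⟩
  · -- kernel
    rw [Ideal.ker_quotient_lift ψ (by intro q hq; exact hle q hq)]
    have hkerψ : RingHom.ker ψ =
        Ideal.span ({q : Polynomial A | ∃ a ∈ JZV, q = C a * X} ∪ {P.comp (-X)})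
          ⊔ Ideal.map C JV := by
      have hmap : IS = Ideal.map f
          (Ideal.span ({q : Polynomial A | ∃ a ∈ JZV, q = C a * X} ∪ {P.comp (-X)})) := by
        rw [Ideal.map_span, hIS]
        congr 1
        ext r
        constructor
        · rintro (⟨a, ha, rfl⟩ | rfl)
          · exact ⟨C a * X, Or.inl ⟨a, ha, rfl⟩, (hCX a)⟩
          · exact ⟨P.comp (-X), Or.inr rfl, hPc⟩
        · rintro ⟨q, (⟨a, ha, rfl⟩ | rfl), rfl⟩
          · exact Or.inl ⟨a, ha, (hCX a).symm ▸ rfl⟩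
          · rw [hPc]; exact Or.inr rfl
      have hfsurj : Function.Surjective f :=
        Polynomial.map_surjective _ Ideal.Quotient.mk_surjective
      have hkf : RingHom.ker f = Ideal.map C JV := by
        rw [hf, Polynomial.ker_mapRingHom, Ideal.mk_ker]
      rw [hψ, ← RingHom.comap_ker, Ideal.mk_ker, hmap,
        Ideal.comap_map_of_surjective f hfsurj, ← RingHom.ker_eq_comap_bot, hkf]
    rw [hkerψ, Ideal.map_sup, Ideal.map_span]
    apply le_antisymm
    · apply sup_le
      · rw [Ideal.span_le]
        rintro x ⟨q, (⟨a, ha, rfl⟩ | rfl), rfl⟩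
        · exact Ideal.subset_span (Or.inr ⟨a, ha, rfl⟩)
        · have : Ideal.Quotient.mk IR (P.comp (-X)) = 0 :=
            Ideal.Quotient.eq_zero_iff_mem.mpr (hIR ▸ Ideal.subset_span (Or.inr rfl))
          rw [this]
          exact Ideal.zero_mem _
      · rw [Ideal.map_le_iff_le_comap, Ideal.map_le_iff_le_comap]
        intro a ha
        rw [Ideal.mem_comap, Ideal.mem_comap]
        exact Ideal.subset_span (Or.inl ⟨a, ha, rfl⟩)
    · rw [Ideal.span_le]
      rintro x (⟨a, ha, rfl⟩ | ⟨a, ha, rfl⟩)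
      · exact Ideal.mem_sup_right
          (Ideal.mem_map_of_mem _ (Ideal.mem_map_of_mem _ ha))
      · exact Ideal.mem_sup_left (Ideal.subset_span ⟨C a * X, Or.inl ⟨a, ha, rfl⟩, rfl⟩)
end

section
/- Let A be a commutative ring, let J_V, J_Z, J_{ZV} be ideals of A with J_V ⊆ J_{ZV} and J_Z ⊆ J_{ZV}, and let P ∈ A[t] be a polynomial. Set R = A[E]/I_R, where I_R is the ideal of the polynomial ring A[E] generated by {a·E : a ∈ J_Z} together with P(−E), and set S = (A/J_V)[E]/I_S, where I_S is the ideal of (A/J_V)[E] generated by {ā·E : ā the image in A/J_V of some a ∈ J_{ZV}} together with P̄(−E), P̄ denoting the image of P under the coefficient map A[t] → (A/J_V)[t]. If moreover J_{ZV} = A, then the kernel of the induced surjective homomorphism R → S is the ideal of R generated by the image of J_V together with the image of E. -/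
open Polynomial

/-- The empty-intersection case of the corrected Lemma 5.4 (Fulton–MacPherson):
with the notation of the corrected lemma, if moreover `J_{ZV} = A`, then the kernel
of the induced surjective homomorphism `R → S` is the ideal of `R` generated by the
image of `J_V` together with the image of `E`. -/
theorem corrected_lemma_5_4_empty_intersection (A : Type*) [CommRing A]
    (JV JZ JZV : Ideal A) (hV : JV ≤ JZV) (hZ : JZ ≤ JZV) (P : Polynomial A)
    (hZV : JZV = ⊤)
    (IR : Ideal (Polynomial A))
    (hIR : IR = Ideal.span
      ({q : Polynomial A | ∃ a ∈ JZ, q = C a * X} ∪ {P.comp (-X)}))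
    (IS : Ideal (Polynomial (A ⧸ JV)))
    (hIS : IS = Ideal.span
      ({q : Polynomial (A ⧸ JV) | ∃ a ∈ JZV, q = C (Ideal.Quotient.mk JV a) * X} ∪
        {(P.map (Ideal.Quotient.mk JV)).comp (-X)})) :
    ∃ φ : (Polynomial A ⧸ IR) →+* (Polynomial (A ⧸ JV) ⧸ IS),
      (∀ q : Polynomial A,
          φ (Ideal.Quotient.mk IR q) =
            Ideal.Quotient.mk IS (q.map (Ideal.Quotient.mk JV))) ∧
      Function.Surjective φ ∧
      RingHom.ker φ = Ideal.span
        ({x : Polynomial A ⧸ IR | ∃ a ∈ JV, x = Ideal.Quotient.mk IR (C a)} ∪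
          {Ideal.Quotient.mk IR X}) := by
  classical
  set mkJV : A →+* A ⧸ JV := Ideal.Quotient.mk JV with hmk
  set M : Polynomial A →+* Polynomial (A ⧸ JV) := mapRingHom mkJV with hM
  set ψ : Polynomial A →+* Polynomial (A ⧸ JV) ⧸ IS := (Ideal.Quotient.mk IS).comp M with hψ
  have hXmem : (X : Polynomial (A ⧸ JV)) ∈ IS := by
    rw [hIS]
    exact Ideal.subset_span (Or.inl ⟨1, by simp [hZV], by simp⟩)
  have hPmem : (P.map mkJV).comp (-X) ∈ IS := by
    rw [hIS]; exact Ideal.subset_span (Or.inr rfl)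
  have hPc : M (P.comp (-X)) = (P.map mkJV).comp (-X) := by
    simp [hM, Polynomial.map_comp]
  have hkey : IR ≤ RingHom.ker ψ := by
    rw [hIR, Ideal.span_le]
    rintro q (⟨a, ha, rfl⟩ | rfl)
    · rw [SetLike.mem_coe, RingHom.mem_ker, hψ, RingHom.comp_apply,
        Ideal.Quotient.eq_zero_iff_mem]
      have h1 : M (C a * X) = C (mkJV a) * X := by simp [hM]
      rw [h1]
      exact Ideal.mul_mem_left _ _ hXmem
    · rw [SetLike.mem_coe, RingHom.mem_ker, hψ, RingHom.comp_apply,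
        Ideal.Quotient.eq_zero_iff_mem, hPc]
      exact hPmem
  refine ⟨Ideal.Quotient.lift IR ψ fun a ha => RingHom.mem_ker.mp (hkey ha), ?_, ?_, ?_⟩
  · intro q; rfl
  · intro y
    obtain ⟨p, rfl⟩ := Ideal.Quotient.mk_surjective y
    obtain ⟨q, rfl⟩ := Polynomial.map_surjective mkJV Ideal.Quotient.mk_surjective p
    exact ⟨Ideal.Quotient.mk IR q, rfl⟩
  · set U : Ideal (Polynomial A) :=
      Ideal.span ({q : Polynomial A | ∃ a ∈ JV, q = C a} ∪ {X}) with hU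
    have hMsurj : Function.Surjective M :=
      Polynomial.map_surjective mkJV Ideal.Quotient.mk_surjective
    have hkerM : RingHom.ker M ≤ U := by
      rw [hM, Polynomial.ker_mapRingHom, Ideal.mk_ker, Ideal.map_le_iff_le_comap]
      intro a ha
      exact Ideal.subset_span (Or.inl ⟨a, ha, rfl⟩)
    have hkerψ : RingHom.ker ψ = U ⊔ IR := by
      apply le_antisymm
      · intro q hq
        have hq' : M q ∈ IS := by
          rw [RingHom.mem_ker, hψ, RingHom.comp_apply,
            Ideal.Quotient.eq_zero_iff_mem] at hq
          exact hq
        have hIS' : IS ≤ Ideal.map M (U ⊔ IR) := by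
          rw [hIS, Ideal.span_le]
          rintro p (⟨a, _, rfl⟩ | rfl)
          · have : (C a * X : Polynomial A) ∈ U ⊔ IR :=
              Ideal.mem_sup_left (Ideal.mul_mem_left _ _
                (Ideal.subset_span (Or.inr rfl)))
            have := Ideal.mem_map_of_mem M this
            simpa [hM] using this
          · have : (P.comp (-X) : Polynomial A) ∈ U ⊔ IR :=
              Ideal.mem_sup_right (hIR ▸ Ideal.subset_span (Or.inr rfl))
            have := Ideal.mem_map_of_mem M this
            rwa [hPc] at this
        have : q ∈ Ideal.comap M (Ideal.map M (U ⊔ IR)) := hIS' hq'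
        rw [Ideal.comap_map_of_surjective M hMsurj] at this
        refine (sup_le le_rfl ?_ : (U ⊔ IR) ⊔ Ideal.comap M ⊥ ≤ U ⊔ IR) this
        exact le_trans (le_of_eq rfl) (le_trans hkerM le_sup_left)
      · refine sup_le ?_ hkey
        rw [hU, Ideal.span_le]
        rintro q (⟨a, ha, rfl⟩ | rfl)
        · rw [SetLike.mem_coe, RingHom.mem_ker, hψ, RingHom.comp_apply,
            Ideal.Quotient.eq_zero_iff_mem]
          have h1 : M (C a) = C (mkJV a) := by simp [hM]
          rw [h1, show mkJV a = 0 from Ideal.Quotient.eq_zero_iff_mem.mpr ha, map_zero]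
          exact IS.zero_mem
        · rw [SetLike.mem_coe, RingHom.mem_ker, hψ, RingHom.comp_apply,
            Ideal.Quotient.eq_zero_iff_mem]
          have h1 : M (X : Polynomial A) = X := by simp [hM]
          rw [h1]
          exact hXmem
    rw [Ideal.ker_quotient_lift ψ hkey, hkerψ, Ideal.map_sup,
      Ideal.map_quotient_self, sup_bot_eq, hU, Ideal.map_span]
    congr 1
    ext x
    simp only [Set.image_union, Set.image_singleton, Set.mem_union, Set.mem_image,
      Set.mem_setOf_eq, Set.mem_singleton_iff]
    constructor
    · rintro (⟨q, ⟨a, ha, rfl⟩, rfl⟩ | rfl)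
      · exact Or.inl ⟨a, ha, rfl⟩
      · exact Or.inr rfl
    · rintro (⟨a, ha, rfl⟩ | rfl)
      · exact Or.inl ⟨C a, ⟨a, ha, rfl⟩, rfl⟩
      · exact Or.inr rfl
end

section
/- With the setup of the context (commutative ring R, elements D_S for all S ⊆ {1,…,n} with |S| ≥ 2 satisfying relation (1), polynomials c_{ij} ∈ R[t] satisfying relation (3)): for every subset S ⊆ {1,…,n} with |S| = k ≥ 2 and every enumeration i₁, …, i_k of the elements of S, one has ∏_{m=1}^{k−1} c_{i_m i_{m+1}}(Σ_{V ⊇ S} D_V) = 0 in R, where the sum Σ_{V ⊇ S} D_V runs over all subsets V ⊆ {1,…,n} with |V| ≥ 2 containing S. -/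
open Finset Polynomial

private lemma fm_zip_ne {α : Type*} : ∀ {l : List α}, l.Pairwise (· ≠ ·) →
    ∀ p ∈ l.zip l.tail, p.1 ≠ p.2 := by
  intro l
  induction l with
  | nil => intro _ p hp; simp at hp
  | cons a t ih =>
    intro h p hp
    cases t with
    | nil => simp at hp
    | cons b t' =>
      rw [List.tail_cons, List.zip_cons_cons, List.mem_cons] at hp
      rcases hp with rfl | hp
      · exact (List.pairwise_cons.mp h).1 b (by simp)
      · exact ih (List.pairwise_cons.mp h).2 p hp

private lemma fm_prod_dvd {R : Type*} [CommRing R] {α : Type*} (E F : α → R) :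
    ∀ (L : List α), (∀ p ∈ L, E p ∣ F p) → (L.map E).prod ∣ (L.map F).prod := by
  intro L
  induction L with
  | nil => intro _; simp
  | cons a t ih =>
    intro h
    simp only [List.map_cons, List.prod_cons]
    exact mul_dvd_mul (h a (by simp)) (ih fun p hp => h p (List.mem_cons_of_mem _ hp))

private lemma fm_key {n : ℕ} {R : Type*} [CommRing R] (D : Finset (Fin n) → R)
    (S : Finset (Fin n))
    (h1 : ∀ S T : Finset (Fin n), 2 ≤ S.card → 2 ≤ T.card →
      S ∩ T ≠ ∅ → S ∩ T ≠ S → S ∩ T ≠ T → D S * D T = 0) :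
    ∀ (l : List (Fin n)) (a : Fin n) (W : Finset (Fin n)),
      2 ≤ W.card → a ∈ W → ¬ S ⊆ W → S ⊆ W ∪ l.toFinset →
      D W * (((a :: l).zip l).map (fun p =>
        ∑ V ∈ univ.filter (fun V : Finset (Fin n) =>
          2 ≤ V.card ∧ ¬ S ⊆ V ∧ p.1 ∈ V ∧ p.2 ∈ V), D V)).prod = 0 := by
  intro l
  induction l with
  | nil =>
    intro a W hW ha hSW hsub
    exact absurd (by simpa using hsub) hSW
  | cons b t ih =>
    intro a W hW ha hSW hsub
    rw [List.zip_cons_cons, List.map_cons, List.prod_cons, ← mul_assoc,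
      Finset.mul_sum, Finset.sum_mul]
    apply Finset.sum_eq_zero
    intro V hV
    simp only [mem_filter, mem_univ, true_and] at hV
    obtain ⟨hV2, hVS, haV, hbV⟩ := hV
    by_cases hWV : W ⊆ V
    · have := ih b V hV2 hbV hVS (by
        intro x hx
        rcases Finset.mem_union.mp (hsub hx) with h | h
        · exact Finset.mem_union_left _ (hWV h)
        · simp only [List.toFinset_cons, Finset.mem_insert] at h
          rcases h with rfl | h
          · exact Finset.mem_union_left _ hbV
          · exact Finset.mem_union_right _ h)
      rw [mul_assoc]
      rw [this, mul_zero]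
    · by_cases hVW : V ⊆ W
      · have := ih b W hW (hVW hbV) hSW (by
          intro x hx
          rcases Finset.mem_union.mp (hsub hx) with h | h
          · exact Finset.mem_union_left _ h
          · simp only [List.toFinset_cons, Finset.mem_insert] at h
            rcases h with rfl | h
            · exact Finset.mem_union_left _ (hVW hbV)
            · exact Finset.mem_union_right _ h)
        calc D W * D V * (((b :: t).zip t).map (fun p =>
              ∑ V ∈ univ.filter (fun V : Finset (Fin n) =>
                2 ≤ V.card ∧ ¬ S ⊆ V ∧ p.1 ∈ V ∧ p.2 ∈ V), D V)).prod
            = D V * (D W * (((b :: t).zip t).map (fun p =>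
              ∑ V ∈ univ.filter (fun V : Finset (Fin n) =>
                2 ≤ V.card ∧ ¬ S ⊆ V ∧ p.1 ∈ V ∧ p.2 ∈ V), D V)).prod) := by ring
          _ = 0 := by rw [this, mul_zero]
      · have h0 : D W * D V = 0 := by
          refine h1 W V hW hV2 ?_ ?_ ?_
          · exact Finset.ne_empty_of_mem (Finset.mem_inter.mpr ⟨ha, haV⟩)
          · exact fun h => hWV (Finset.inter_eq_left.mp h)
          · exact fun h => hVW (Finset.inter_eq_right.mp h)
        rw [h0, zero_mul]

/-- Relations (1) and (3) of Fulton–MacPherson's presentation imply the relation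
`c_S(Σ_{S ⊆ V} D_V) = 0` for every `S ⊆ {1,…,n}` with `|S| ≥ 2` and every
enumeration `i₁, …, i_k` of the elements of `S`, where
`c_S(t) = ∏_{m=1}^{k−1} c_{i_m i_{m+1}}(t)`. -/
theorem relation_cS (n : ℕ) (hn : 2 ≤ n) (R : Type*) [CommRing R]
    (D : Finset (Fin n) → R) (c : Fin n → Fin n → Polynomial R)
    (hsym : ∀ i j : Fin n, i ≠ j → c i j = c j i)
    (h1 : ∀ S T : Finset (Fin n), 2 ≤ S.card → 2 ≤ T.card →
      S ∩ T ≠ ∅ → S ∩ T ≠ S → S ∩ T ≠ T → D S * D T = 0)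
    (h3 : ∀ i j : Fin n, i ≠ j →
      (c i j).eval (∑ V ∈ univ.filter
        (fun V : Finset (Fin n) => 2 ≤ V.card ∧ i ∈ V ∧ j ∈ V), D V) = 0)
    (S : Finset (Fin n)) (hS : 2 ≤ S.card)
    (l : List (Fin n)) (hnd : l.Nodup) (hl : l.toFinset = S) :
    ((l.zip l.tail).map (fun p => (c p.1 p.2).eval
      (∑ V ∈ univ.filter
        (fun V : Finset (Fin n) => 2 ≤ V.card ∧ S ⊆ V), D V))).prod = 0 := by
  set x : R := ∑ V ∈ univ.filter (fun V : Finset (Fin n) => 2 ≤ V.card ∧ S ⊆ V), D V with hx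
  set e : Fin n → Fin n → R := fun i j =>
    ∑ V ∈ univ.filter (fun V : Finset (Fin n) =>
      2 ≤ V.card ∧ ¬ S ⊆ V ∧ i ∈ V ∧ j ∈ V), D V with he
  -- each pair has distinct elements of S
  have hpair : ∀ p ∈ l.zip l.tail, p.1 ≠ p.2 ∧ p.1 ∈ S ∧ p.2 ∈ S := by
    intro p hp
    have hmem := List.of_mem_zip hp
    refine ⟨fm_zip_ne hnd p hp, ?_, ?_⟩
    · rw [← hl]; exact List.mem_toFinset.mpr hmem.1
    · rw [← hl]; exact List.mem_toFinset.mpr (List.mem_of_mem_tail hmem.2)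
  -- divisibility of each factor
  have hdvd : ∀ p ∈ l.zip l.tail, e p.1 p.2 ∣ (c p.1 p.2).eval x := by
    intro p hp
    obtain ⟨hne, h1S, h2S⟩ := hpair p hp
    set y : R := ∑ V ∈ univ.filter
      (fun V : Finset (Fin n) => 2 ≤ V.card ∧ p.1 ∈ V ∧ p.2 ∈ V), D V with hy
    have hyx : e p.1 p.2 = y - x := by
      have hBA : univ.filter (fun V : Finset (Fin n) => 2 ≤ V.card ∧ S ⊆ V) ⊆
          univ.filter (fun V : Finset (Fin n) => 2 ≤ V.card ∧ p.1 ∈ V ∧ p.2 ∈ V) := by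
        intro V hV
        simp only [mem_filter, mem_univ, true_and] at hV ⊢
        exact ⟨hV.1, hV.2 h1S, hV.2 h2S⟩
      have hset : univ.filter (fun V : Finset (Fin n) =>
          2 ≤ V.card ∧ ¬ S ⊆ V ∧ p.1 ∈ V ∧ p.2 ∈ V) =
          univ.filter (fun V : Finset (Fin n) => 2 ≤ V.card ∧ p.1 ∈ V ∧ p.2 ∈ V) \
          univ.filter (fun V : Finset (Fin n) => 2 ≤ V.card ∧ S ⊆ V) := by
        ext V
        simp only [Finset.mem_sdiff, mem_filter, mem_univ, true_and]
        tauto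
      simp only [he, hy, hx]
      rw [hset, Finset.sum_sdiff_eq_sub hBA]
    have := Polynomial.sub_dvd_eval_sub x y (c p.1 p.2)
    rw [h3 p.1 p.2 hne, sub_zero] at this
    rw [hyx, ← neg_sub x y]
    exact neg_dvd.mpr this
  have hdvd2 : ((l.zip l.tail).map (fun p => e p.1 p.2)).prod ∣
      ((l.zip l.tail).map (fun p => (c p.1 p.2).eval x)).prod :=
    fm_prod_dvd _ _ _ hdvd
  -- the product of the e's is zero
  have hzero : ((l.zip l.tail).map (fun p => e p.1 p.2)).prod = 0 := by
    match l, hl with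
    | [], hl => simp at hl; rw [← hl] at hS; simp at hS
    | [a], hl => simp at hl; rw [← hl] at hS; simp at hS
    | a :: b :: t, hl =>
      rw [List.tail_cons, List.zip_cons_cons, List.map_cons, List.prod_cons, he]
      rw [Finset.sum_mul]
      apply Finset.sum_eq_zero
      intro V hV
      simp only [mem_filter, mem_univ, true_and] at hV
      obtain ⟨hV2, hVS, haV, hbV⟩ := hV
      exact fm_key D S h1 t b V hV2 hbV hVS (by
        intro x hx
        rw [← hl] at hx
        simp only [List.toFinset_cons, Finset.mem_insert, List.mem_toFinset] at hx
        rcases hx with rfl | rfl | hx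
        · exact Finset.mem_union_left _ haV
        · exact Finset.mem_union_left _ hbV
        · exact Finset.mem_union_right _ (List.mem_toFinset.mpr hx))
  rw [hzero] at hdvd2
  exact (zero_dvd_iff.mp hdvd2)
end

section
/- With the setup of the context (commutative ring R, elements D_S for all S ⊆ {1,…,n} with |S| ≥ 2 satisfying relation (1), polynomials c_{ij} ∈ R[t] satisfying relation (3)): for all subsets S, S' ⊆ {1,…,n} with |S| ≥ 2, |S'| ≥ 2 and |S ∩ S'| = 1, and every enumeration i₁, …, i_k of the elements of S', one has D_S · ∏_{m=1}^{k−1} c_{i_m i_{m+1}}(Σ_{V ⊇ S ∪ S'} D_V) = 0 in R, where the sum Σ_{V ⊇ S ∪ S'} D_V runs over all subsets V ⊆ {1,…,n} with |V| ≥ 2 containing S ∪ S'. -/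
set_option maxRecDepth 4000


open Finset

private lemma getElem_idx_congr {α : Type*} (l : List α) {a b : ℕ} (h : a = b)
    (ha : a < l.length) : l[a] = l[b]'(h ▸ ha) := by subst h; rfl

private lemma prod_pair_zero {R : Type*} [CommRing R] {ι : Type*} [DecidableEq ι]
    (s : Finset ι) (f : ι → R) {a b : ι} (ha : a ∈ s) (hb : b ∈ s) (hab : a ≠ b)
    (h : f a * f b = 0) : ∏ i ∈ s, f i = 0 := by
  rw [← Finset.mul_prod_erase s f ha,
      ← Finset.mul_prod_erase _ f (Finset.mem_erase.2 ⟨hab.symm, hb⟩),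
      ← mul_assoc, h, zero_mul]

private lemma exists_top {α : Type*} [DecidableEq α] :
    ∀ (M : List (Finset α)), M ≠ [] →
    M.Chain' (fun A B => (A ∩ B).Nonempty) →
    M.Pairwise (fun A B => A ⊆ B ∨ B ⊆ A ∨ A ∩ B = ∅) →
    ∃ U ∈ M, ∀ A ∈ M, A ⊆ U := by
  intro M
  induction M with
  | nil => intro h; exact absurd rfl h
  | cons B M ih =>
    intro _ hc hp
    rcases M with _ | ⟨B', M'⟩
    · refine ⟨B, by simp, ?_⟩
      intro A hA
      rw [List.mem_singleton] at hA
      subst hA; exact Finset.Subset.refl _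
    · obtain ⟨U, hU, hUall⟩ := ih (by simp) (List.isChain_cons_cons.1 hc).2 hp.tail
      have hBB' : (B ∩ B').Nonempty := (List.isChain_cons_cons.1 hc).1
      have hBU : (B ∩ U).Nonempty := by
        obtain ⟨v, hv⟩ := hBB'
        exact ⟨v, Finset.mem_inter.2 ⟨(Finset.mem_inter.1 hv).1,
          hUall B' (by simp) (Finset.mem_inter.1 hv).2⟩⟩
      rcases (List.pairwise_cons.1 hp).1 U hU with h | h | h
      · refine ⟨U, List.mem_cons_of_mem _ hU, ?_⟩
        intro A hA
        rcases List.mem_cons.1 hA with rfl | hA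
        · exact h
        · exact hUall A hA
      · refine ⟨B, List.mem_cons_self, ?_⟩
        intro A hA
        rcases List.mem_cons.1 hA with rfl | hA
        · exact Finset.Subset.refl _
        · exact (hUall A hA).trans h
      · rw [h] at hBU
        exact absurd hBU (by simp)

/-- Relations (1) and (3) of Fulton–MacPherson's presentation imply relation (4):
`D_S · c_{S'}(Σ_{S ∪ S' ⊆ V} D_V) = 0` whenever `|S| ≥ 2`, `|S'| ≥ 2` and
`|S ∩ S'| = 1`, for every enumeration `i₁, …, i_k` of the elements of `S'`, where
`c_{S'}(t) = ∏_{m=1}^{k−1} c_{i_m i_{m+1}}(t)`. -/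
theorem relation_four (n : ℕ) (hn : 2 ≤ n) (R : Type*) [CommRing R]
    (D : Finset (Fin n) → R) (c : Fin n → Fin n → Polynomial R)
    (hsym : ∀ i j : Fin n, i ≠ j → c i j = c j i)
    (h1 : ∀ S T : Finset (Fin n), 2 ≤ S.card → 2 ≤ T.card →
      S ∩ T ≠ ∅ → S ∩ T ≠ S → S ∩ T ≠ T → D S * D T = 0)
    (h3 : ∀ i j : Fin n, i ≠ j →
      (c i j).eval (∑ V ∈ univ.filter
        (fun V : Finset (Fin n) => 2 ≤ V.card ∧ i ∈ V ∧ j ∈ V), D V) = 0)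
    (S S' : Finset (Fin n)) (hS : 2 ≤ S.card) (hS' : 2 ≤ S'.card)
    (hint : (S ∩ S').card = 1)
    (l : List (Fin n)) (hnd : l.Nodup) (hl : l.toFinset = S') :
    D S * ((l.zip l.tail).map (fun p => (c p.1 p.2).eval
      (∑ V ∈ univ.filter
        (fun V : Finset (Fin n) => 2 ≤ V.card ∧ S ∪ S' ⊆ V), D V))).prod = 0 := by
  classical
  set x : R := ∑ V ∈ univ.filter
      (fun V : Finset (Fin n) => 2 ≤ V.card ∧ S ∪ S' ⊆ V), D V with hxdef
  have hlS : l.length = S'.card := by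
    rw [← hl]; exact (List.toFinset_card_of_nodup hnd).symm
  have hl2 : 2 ≤ l.length := hlS ▸ hS'
  obtain ⟨k, hk⟩ : ∃ k, l.length = k + 1 := ⟨l.length - 1, by omega⟩
  have hk1 : 1 ≤ k := by omega
  have hia : ∀ i : Fin k, (i : ℕ) < l.length := fun i => by omega
  have hib : ∀ i : Fin k, (i : ℕ) + 1 < l.length := fun i => by omega
  obtain ⟨f, hf⟩ : ∃ f : Fin k → Fin n × Fin n,
      ∀ i : Fin k, f i = (l[(i : ℕ)]'(hia i), l[(i : ℕ) + 1]'(hib i)) :=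
    ⟨_, fun i => rfl⟩
  have hmem : ∀ (t : ℕ) (ht : t < l.length), l[t] ∈ S' := by
    intro t ht; rw [← hl]; exact List.mem_toFinset.2 (l.getElem_mem ht)
  have hf1 : ∀ i : Fin k, (f i).1 ∈ S' := by
    intro i; rw [hf]; exact hmem _ (hia i)
  have hf2 : ∀ i : Fin k, (f i).2 ∈ S' := by
    intro i; rw [hf]; exact hmem _ (hib i)
  have hfne : ∀ i : Fin k, (f i).1 ≠ (f i).2 := by
    intro i h
    rw [hf] at h
    have := (List.Nodup.getElem_inj_iff hnd).1 h
    omega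
  -- rewrite the list as `List.ofFn f`
  have hPof : l.zip l.tail = List.ofFn f := by
    apply List.ext_getElem
    · simp only [List.length_zip, List.length_tail, List.length_ofFn, hk]
      omega
    · intro i h1' h2'
      have hik : i < k := by simpa using h2'
      rw [List.getElem_ofFn, List.getElem_zip, List.getElem_tail, hf]
  rw [hPof, List.map_ofFn, List.prod_ofFn]
  show D S * ∏ i : Fin k, (c (f i).1 (f i).2).eval x = 0
  -- factor each evaluation
  have hstep : ∀ i : Fin k, ∃ e : R, (c (f i).1 (f i).2).eval x =
      (x - ∑ V ∈ univ.filter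
        (fun V : Finset (Fin n) => 2 ≤ V.card ∧ (f i).1 ∈ V ∧ (f i).2 ∈ V), D V) * e := by
    intro i
    have h0 := h3 (f i).1 (f i).2 (hfne i)
    obtain ⟨e, he⟩ := Polynomial.sub_dvd_eval_sub x
      (∑ V ∈ univ.filter
        (fun V : Finset (Fin n) => 2 ≤ V.card ∧ (f i).1 ∈ V ∧ (f i).2 ∈ V), D V)
      (c (f i).1 (f i).2)
    refine ⟨e, ?_⟩
    rw [← sub_zero ((c (f i).1 (f i).2).eval x), ← h0, he]
  choose e he using hstep
  simp only [he]
  rw [Finset.prod_mul_distrib]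
  -- rewrite each factor `x - y i` as minus a sum over "bad" sets
  have hy : ∀ i : Fin k,
      x - (∑ V ∈ univ.filter
        (fun V : Finset (Fin n) => 2 ≤ V.card ∧ (f i).1 ∈ V ∧ (f i).2 ∈ V), D V)
      = -(∑ V ∈ univ.filter
        (fun V : Finset (Fin n) =>
          (2 ≤ V.card ∧ (f i).1 ∈ V ∧ (f i).2 ∈ V) ∧ ¬S ∪ S' ⊆ V), D V) := by
    intro i
    have hdisj : Disjoint
        (univ.filter (fun V : Finset (Fin n) => 2 ≤ V.card ∧ S ∪ S' ⊆ V))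
        (univ.filter (fun V : Finset (Fin n) =>
          (2 ≤ V.card ∧ (f i).1 ∈ V ∧ (f i).2 ∈ V) ∧ ¬S ∪ S' ⊆ V)) := by
      rw [Finset.disjoint_left]
      intro V hV1 hV2
      exact ((Finset.mem_filter.1 hV2).2).2 ((Finset.mem_filter.1 hV1).2).2
    have hun : univ.filter
        (fun V : Finset (Fin n) => 2 ≤ V.card ∧ (f i).1 ∈ V ∧ (f i).2 ∈ V)
        = univ.filter (fun V : Finset (Fin n) => 2 ≤ V.card ∧ S ∪ S' ⊆ V)
          ∪ univ.filter (fun V : Finset (Fin n) =>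
            (2 ≤ V.card ∧ (f i).1 ∈ V ∧ (f i).2 ∈ V) ∧ ¬S ∪ S' ⊆ V) := by
      ext V
      simp only [Finset.mem_filter, Finset.mem_union, Finset.mem_univ, true_and]
      constructor
      · intro h
        by_cases hs : S ∪ S' ⊆ V
        · exact Or.inl ⟨h.1, hs⟩
        · exact Or.inr ⟨h, hs⟩
      · rintro (⟨h2, hs⟩ | ⟨h, _⟩)
        · exact ⟨h2, hs (Finset.mem_union_right _ (hf1 i)),
            hs (Finset.mem_union_right _ (hf2 i))⟩
        · exact h
    rw [hun, Finset.sum_union hdisj, ← hxdef]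
    ring
  simp only [hy]
  -- key claim : D S times the product of the bad sums vanishes
  have hKey : D S * ∏ i : Fin k, ∑ V ∈ univ.filter
      (fun V : Finset (Fin n) =>
        (2 ≤ V.card ∧ (f i).1 ∈ V ∧ (f i).2 ∈ V) ∧ ¬S ∪ S' ⊆ V), D V = 0 := by
    rw [Finset.prod_univ_sum, Finset.mul_sum]
    apply Finset.sum_eq_zero
    intro q hq
    rw [Fintype.mem_piFinset] at hq
    have hq' : ∀ i : Fin k, (2 ≤ (q i).card ∧ (f i).1 ∈ q i ∧ (f i).2 ∈ q i)
        ∧ ¬S ∪ S' ⊆ q i := fun i => (Finset.mem_filter.1 (hq i)).2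
    have hq1 : ∀ i, 2 ≤ (q i).card := fun i => (hq' i).1.1
    have hqn : ∀ i, ¬S ∪ S' ⊆ q i := fun i => (hq' i).2
    have hqa : ∀ (t : ℕ) (ht : t < k), l[t]'(by omega) ∈ q ⟨t, ht⟩ := by
      intro t ht
      have h' := (hq' ⟨t, ht⟩).1.2.1
      rw [hf] at h'
      exact h'
    have hqb : ∀ (t : ℕ) (ht : t < k), l[t + 1]'(by omega) ∈ q ⟨t, ht⟩ := by
      intro t ht
      have h' := (hq' ⟨t, ht⟩).1.2.2
      rw [hf] at h'
      exact h'
    by_cases hov : ∃ i, ¬(S ⊆ q i ∨ q i ⊆ S ∨ S ∩ q i = ∅)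
    · obtain ⟨i, hi⟩ := hov
      push_neg at hi
      have h0 : D S * D (q i) = 0 := by
        refine h1 S (q i) hS (hq1 i) (Finset.nonempty_iff_ne_empty.1 hi.2.2) ?_ ?_
        · intro h; exact hi.1 (Finset.inter_eq_left.1 h)
        · intro h; exact hi.2.1 (Finset.inter_eq_right.1 h)
      rw [← Finset.mul_prod_erase univ _ (Finset.mem_univ i), ← mul_assoc, h0, zero_mul]
    by_cases hov2 : ∃ i j : Fin k, i ≠ j ∧ ¬(q i ⊆ q j ∨ q j ⊆ q i ∨ q i ∩ q j = ∅)
    · obtain ⟨i, j, hij, hrel⟩ := hov2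
      push_neg at hrel
      have h0 : D (q i) * D (q j) = 0 := by
        refine h1 _ _ (hq1 i) (hq1 j) (Finset.nonempty_iff_ne_empty.1 hrel.2.2) ?_ ?_
        · intro h; exact hrel.1 (Finset.inter_eq_left.1 h)
        · intro h; exact hrel.2.1 (Finset.inter_eq_right.1 h)
      rw [prod_pair_zero univ _ (Finset.mem_univ i) (Finset.mem_univ j) hij h0, mul_zero]
    · exfalso
      push_neg at hov hov2
      obtain ⟨U, hU, hUall⟩ := exists_top (List.ofFn q)
        (by simp only [ne_eq, List.ofFn_eq_nil_iff]; omega)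
        (by
          show List.IsChain _ (List.ofFn q)
          rw [List.isChain_ofFn]
          intro i hi
          refine ⟨l[i + 1]'(by omega), Finset.mem_inter.2 ⟨?_, ?_⟩⟩
          · exact hqb i (by omega)
          · exact hqa (i + 1) hi)
        (by
          rw [List.pairwise_ofFn]
          intro i j hij
          exact hov2 i j (ne_of_lt hij))
      obtain ⟨j, rfl⟩ := List.mem_ofFn.1 hU
      have hUall' : ∀ i : Fin k, q i ⊆ q j := fun i =>
        hUall (q i) (List.mem_ofFn.2 ⟨i, rfl⟩)
      have hS'U : S' ⊆ q j := by
        intro v hv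
        rw [← hl, List.mem_toFinset] at hv
        obtain ⟨t, ht, rfl⟩ := List.mem_iff_getElem.1 hv
        by_cases htk : t < k
        · exact hUall' ⟨t, htk⟩ (hqa t htk)
        · have h' : t - 1 < k := by omega
          rw [getElem_idx_congr l (show t = (t - 1) + 1 by omega) ht]
          exact hUall' ⟨t - 1, h'⟩ (hqb (t - 1) h')
      have hSS' : (S ∩ S').Nonempty := Finset.card_pos.1 (by omega)
      rcases hov j with h | h | h
      · exact hqn j (Finset.union_subset h hS'U)
      · have hss : S ∩ S' = S' := Finset.inter_eq_right.2 (hS'U.trans h)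
        rw [hss] at hint
        omega
      · obtain ⟨v, hv⟩ := hSS'
        have hvm : v ∈ S ∩ q j := Finset.mem_inter.2
          ⟨(Finset.mem_inter.1 hv).1, hS'U (Finset.mem_inter.1 hv).2⟩
        rw [h] at hvm
        exact absurd hvm (Finset.notMem_empty v)
  -- put everything together
  have hprod : (∏ i : Fin k, -(∑ V ∈ univ.filter
      (fun V : Finset (Fin n) =>
        (2 ≤ V.card ∧ (f i).1 ∈ V ∧ (f i).2 ∈ V) ∧ ¬S ∪ S' ⊆ V), D V))
      = (-1) ^ k * ∏ i : Fin k, ∑ V ∈ univ.filter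
      (fun V : Finset (Fin n) =>
        (2 ≤ V.card ∧ (f i).1 ∈ V ∧ (f i).2 ∈ V) ∧ ¬S ∪ S' ⊆ V), D V := by
    rw [show (fun i : Fin k => -(∑ V ∈ univ.filter
        (fun V : Finset (Fin n) =>
          (2 ≤ V.card ∧ (f i).1 ∈ V ∧ (f i).2 ∈ V) ∧ ¬S ∪ S' ⊆ V), D V))
        = (fun i => (-1 : R) * ∑ V ∈ univ.filter
        (fun V : Finset (Fin n) =>
          (2 ≤ V.card ∧ (f i).1 ∈ V ∧ (f i).2 ∈ V) ∧ ¬S ∪ S' ⊆ V), D V) from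
      funext fun i => (neg_one_mul _).symm]
    rw [Finset.prod_mul_distrib, Finset.prod_const]
    simp
  rw [hprod]
  linear_combination ((-1 : R) ^ k * ∏ i : Fin k, e i) * hKey
end

section
/- With the setup of the context (commutative ring R, elements D_S for all S ⊆ {1,…,n} with |S| ≥ 2 satisfying relation (1), polynomials c_{ij} ∈ R[t] satisfying relation (3)): let T, W ⊆ {1,…,n} with T ⊆ W and |W| ≥ 2, let j ∈ {1,…,n} with j ∉ W, and let i ∈ T. Then D_W · c_{ij}(Σ_{V ⊇ T ∪ {j}} D_V) = 0 in R, where the sum runs over all subsets V ⊆ {1,…,n} with |V| ≥ 2 containing T ∪ {j}. -/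
open Finset

/-- The key step in the induction proving Fulton–MacPherson's presentation of
`A^•(X[n])`: if `T ⊆ W`, `|W| ≥ 2`, `j ∉ W` and `i ∈ T`, then
`D_W · c_{ij}(Σ_{T ∪ {j} ⊆ V} D_V) = 0`. -/
theorem key_induction_step (n : ℕ) (hn : 2 ≤ n) (R : Type*) [CommRing R]
    (D : Finset (Fin n) → R) (c : Fin n → Fin n → Polynomial R)
    (hsym : ∀ i j : Fin n, i ≠ j → c i j = c j i)
    (h1 : ∀ S T : Finset (Fin n), 2 ≤ S.card → 2 ≤ T.card →
      S ∩ T ≠ ∅ → S ∩ T ≠ S → S ∩ T ≠ T → D S * D T = 0)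
    (h3 : ∀ i j : Fin n, i ≠ j →
      (c i j).eval (∑ V ∈ univ.filter
        (fun V : Finset (Fin n) => 2 ≤ V.card ∧ i ∈ V ∧ j ∈ V), D V) = 0)
    (T W : Finset (Fin n)) (hTW : T ⊆ W) (hW : 2 ≤ W.card)
    (j : Fin n) (hj : j ∉ W) (i : Fin n) (hi : i ∈ T) :
    D W * (c i j).eval (∑ V ∈ univ.filter
      (fun V : Finset (Fin n) => 2 ≤ V.card ∧ insert j T ⊆ V), D V) = 0 := by
  have hiW : i ∈ W := hTW hi
  have hij : i ≠ j := fun h => hj (h ▸ hiW)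
  set A := ∑ V ∈ univ.filter
      (fun V : Finset (Fin n) => 2 ≤ V.card ∧ i ∈ V ∧ j ∈ V), D V with hA
  set B := ∑ V ∈ univ.filter
      (fun V : Finset (Fin n) => 2 ≤ V.card ∧ insert j T ⊆ V), D V with hB
  have hsub : (univ.filter (fun V : Finset (Fin n) => 2 ≤ V.card ∧ insert j T ⊆ V)) ⊆
      univ.filter (fun V : Finset (Fin n) => 2 ≤ V.card ∧ i ∈ V ∧ j ∈ V) := by
    intro V hV
    simp only [mem_filter, mem_univ, true_and] at hV ⊢
    exact ⟨hV.1, hV.2 (Finset.mem_insert_of_mem hi), hV.2 (Finset.mem_insert_self _ _)⟩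
  have hdiff : D W * (A - B) = 0 := by
    rw [hA, hB, ← Finset.sum_sdiff_eq_sub hsub, Finset.mul_sum]
    apply Finset.sum_eq_zero
    intro V hV
    simp only [mem_sdiff, mem_filter, mem_univ, true_and] at hV
    obtain ⟨⟨hVc, hiV, hjV⟩, hV2⟩ := hV
    apply h1 W V hW hVc
    · exact Finset.ne_empty_of_mem (Finset.mem_inter.mpr ⟨hiW, hiV⟩)
    · intro h
      have hWV : W ⊆ V := by rw [← Finset.inter_eq_left, h]
      exact hV2 ⟨hVc, Finset.insert_subset hjV (hTW.trans hWV)⟩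
    · intro h
      have hVW : V ⊆ W := by rw [← Finset.inter_eq_right, h]
      exact hj (hVW hjV)
  have hkey : D W * ((c i j).eval B) = D W * ((c i j).eval A) := by
    obtain ⟨q, hq⟩ := Polynomial.sub_dvd_eval_sub A B (c i j)
    have h0 : D W * ((c i j).eval A - (c i j).eval B) = 0 := by
      rw [hq, ← mul_assoc, hdiff, zero_mul]
    rw [mul_sub, sub_eq_zero] at h0
    exact h0.symm
  rw [hkey, h3 i j hij, mul_zero]
end

section
/- Let n ≥ 2, let A be a commutative ring, let J_S ⊆ A be an ideal for every subset S ⊆ {1,…,n} with |S| ≥ 2, and let c_{ij} ∈ A[t] be a polynomial for every pair of distinct i, j ∈ {1,…,n} with c_{ij} = c_{ji}. In the polynomial ring P = A[D_S : S ⊆ {1,…,n}, |S| ≥ 2], consider the following families of elements: (1) D_S·D_T for all overlapping pairs S, T; (2) a·D_S for all S and all a ∈ J_S; (3) c_{ij}(Σ_{V ∋ i,j} D_V) for all i ≠ j, the sum over all V with |V| ≥ 2 containing i and j; (3') ∏_{m=1}^{k−1} c_{i_m i_{m+1}}(Σ_{V ⊇ S} D_V) for every S with |S| = k ≥ 2 and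 every enumeration i₁,…,i_k of S, the sum over all V with |V| ≥ 2 containing S; (4) D_S · ∏_{m=1}^{k−1} c_{i_m i_{m+1}}(Σ_{V ⊇ S∪S'} D_V) for all S, S' with |S| ≥ 2, |S'| ≥ 2, |S ∩ S'| = 1, and every enumeration i₁,…,i_k of S'. Then the ideal of P generated by the families (1), (2), (3), (3'), (4) is equal to the ideal of P generated by the families (1), (2), (3) alone. -/
open Finset

/-- The index type: subsets `S ⊆ {1,…,n}` with `|S| ≥ 2`. -/
abbrev FMIdx (n : ℕ) := {S : Finset (Fin n) // 2 ≤ S.card}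

noncomputable section

/-- The sum `Σ_{W ⊆ V} D_V` in the polynomial ring `A[D_S : |S| ≥ 2]`, the sum
running over all `V ⊆ {1,…,n}` with `|V| ≥ 2` containing `W`. -/
def sumOver (n : ℕ) (A : Type*) [CommRing A] (W : Finset (Fin n)) :
    MvPolynomial (FMIdx n) A :=
  ∑ V ∈ univ.filter (fun V : FMIdx n => W ⊆ V.1), MvPolynomial.X V

/-- Family (1): `D_S · D_T` for all overlapping pairs `S, T`. -/
def fam1 (n : ℕ) (A : Type*) [CommRing A] : Set (MvPolynomial (FMIdx n) A) :=
  {p | ∃ (S T : Finset (Fin n)) (hS : 2 ≤ S.card) (hT : 2 ≤ T.card),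
    S ∩ T ≠ ∅ ∧ S ∩ T ≠ S ∧ S ∩ T ≠ T ∧
    p = MvPolynomial.X ⟨S, hS⟩ * MvPolynomial.X ⟨T, hT⟩}

/-- Family (2): `a · D_S` for all `S` with `|S| ≥ 2` and all `a ∈ J_S`. -/
def fam2 (n : ℕ) (A : Type*) [CommRing A] (J : Finset (Fin n) → Ideal A) :
    Set (MvPolynomial (FMIdx n) A) :=
  {p | ∃ (S : Finset (Fin n)) (hS : 2 ≤ S.card), ∃ a ∈ J S,
    p = MvPolynomial.C a * MvPolynomial.X ⟨S, hS⟩}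

/-- Family (3): `c_{ij}(Σ_{i,j ∈ V} D_V)` for all `i ≠ j`. -/
def fam3 (n : ℕ) (A : Type*) [CommRing A] (c : Fin n → Fin n → Polynomial A) :
    Set (MvPolynomial (FMIdx n) A) :=
  {p | ∃ i j : Fin n, i ≠ j ∧
    p = Polynomial.aeval
      (∑ V ∈ univ.filter (fun V : FMIdx n => i ∈ V.1 ∧ j ∈ V.1), MvPolynomial.X V)
      (c i j)}

/-- Family (3'): `∏_{m=1}^{k−1} c_{i_m i_{m+1}}(Σ_{S ⊆ V} D_V)` for every `S` with
`|S| = k ≥ 2` and every enumeration `i₁,…,i_k` of `S`. -/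
def fam3' (n : ℕ) (A : Type*) [CommRing A] (c : Fin n → Fin n → Polynomial A) :
    Set (MvPolynomial (FMIdx n) A) :=
  {p | ∃ l : List (Fin n), l.Nodup ∧ 2 ≤ l.length ∧
    p = ((l.zip l.tail).map
      (fun q => Polynomial.aeval (sumOver n A l.toFinset) (c q.1 q.2))).prod}

/-- Family (4): `D_S · ∏_{m=1}^{k−1} c_{i_m i_{m+1}}(Σ_{S ∪ S' ⊆ V} D_V)` for all
`S, S'` with `|S| ≥ 2`, `|S'| ≥ 2`, `|S ∩ S'| = 1`, and every enumeration
`i₁,…,i_k` of `S'`. -/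
def fam4 (n : ℕ) (A : Type*) [CommRing A] (c : Fin n → Fin n → Polynomial A) :
    Set (MvPolynomial (FMIdx n) A) :=
  {p | ∃ (S : Finset (Fin n)) (hS : 2 ≤ S.card) (l : List (Fin n)),
    l.Nodup ∧ 2 ≤ l.length ∧ (S ∩ l.toFinset).card = 1 ∧
    p = MvPolynomial.X ⟨S, hS⟩ * ((l.zip l.tail).map
      (fun q => Polynomial.aeval (sumOver n A (S ∪ l.toFinset)) (c q.1 q.2))).prod}

section Aux

variable (n : ℕ) (A : Type*) [CommRing A]

/-- `Σ_{i,j ∈ V} D_V`, the sum appearing in family (3). -/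
def Pij (i j : Fin n) : MvPolynomial (FMIdx n) A :=
  ∑ V ∈ univ.filter (fun V : FMIdx n => i ∈ V.1 ∧ j ∈ V.1), MvPolynomial.X V

/-- The "error" sum `Σ_{i,j ∈ V, W ⊄ V} D_V`. -/
def Esum (W : Finset (Fin n)) (i j : Fin n) : MvPolynomial (FMIdx n) A :=
  ∑ V ∈ univ.filter (fun V : FMIdx n => (i ∈ V.1 ∧ j ∈ V.1) ∧ ¬ W ⊆ V.1), MvPolynomial.X V

/-- Generators `X_V` with `T ⊆ V` and `W ⊄ V`. -/
def Gset (W T : Finset (Fin n)) : Set (MvPolynomial (FMIdx n) A) :=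
  {p | ∃ V : FMIdx n, T ⊆ V.1 ∧ ¬ W ⊆ V.1 ∧ p = MvPolynomial.X V}

variable {n A}

lemma Pij_eq (W : Finset (Fin n)) (i j : Fin n) (hi : i ∈ W) (hj : j ∈ W) :
    Pij n A i j = sumOver n A W + Esum n A W i j := by
  classical
  rw [Pij, sumOver, Esum,
    ← Finset.sum_filter_add_sum_filter_not
      (univ.filter fun V : FMIdx n => i ∈ V.1 ∧ j ∈ V.1) (fun V => W ⊆ V.1)]
  congr 1
  · rw [Finset.filter_filter]
    apply Finset.sum_congr _ fun _ _ => rfl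
    ext V
    simp only [Finset.mem_filter, Finset.mem_univ, true_and]
    exact ⟨fun h => h.2, fun h => ⟨⟨h hi, h hj⟩, h⟩⟩
  · rw [Finset.filter_filter]

lemma factor (W : Finset (Fin n)) (i j : Fin n) (hi : i ∈ W) (hj : j ∈ W)
    (cp : Polynomial A) :
    ∃ r, Polynomial.aeval (sumOver n A W) cp
      = Polynomial.aeval (Pij n A i j) cp - Esum n A W i j * r := by
  have key : Esum n A W i j ∣
      (Polynomial.aeval (Pij n A i j) cp - Polynomial.aeval (sumOver n A W) cp) := by
    have h := Polynomial.sub_dvd_eval_sub (Pij n A i j) (sumOver n A W)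
      (cp.map (algebraMap A (MvPolynomial (FMIdx n) A)))
    rw [Polynomial.eval_map, Polynomial.eval_map, ← Polynomial.aeval_def,
      ← Polynomial.aeval_def] at h
    have he : Pij n A i j - sumOver n A W = Esum n A W i j := by
      rw [Pij_eq W i j hi hj]; ring
    rwa [he] at h
  obtain ⟨r, hr⟩ := key
  exact ⟨r, by linear_combination -hr⟩

lemma zip_ne : ∀ (l : List (Fin n)), l.Nodup → ∀ q ∈ l.zip l.tail, q.1 ≠ q.2 := by
  intro l
  induction l with
  | nil => simp
  | cons a t ih =>
    cases t with
    | nil => simp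
    | cons b t' =>
      intro hl q hq
      rcases List.nodup_cons.mp hl with ⟨ha, h2⟩
      simp only [List.tail_cons, List.zip_cons_cons] at hq
      rcases List.mem_cons.mp hq with h | h
      · subst h
        intro e
        have hab : a = b := e
        exact ha (by rw [hab]; exact List.mem_cons_self)
      · exact ih h2 q h

lemma zip_mem (l : List (Fin n)) : ∀ q ∈ l.zip l.tail,
    q.1 ∈ l.toFinset ∧ q.2 ∈ l.toFinset := by
  rintro ⟨x, y⟩ hq
  obtain ⟨h1, h2⟩ := List.of_mem_zip hq
  exact ⟨List.mem_toFinset.mpr h1, List.mem_toFinset.mpr (List.mem_of_mem_tail h2)⟩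

lemma prod_sub_mem {R : Type*} [CommRing R] (I : Ideal R) {α : Type*} :
    ∀ (L : List α) (f e : α → R), (∀ q ∈ L, f q - e q ∈ I) →
      (L.map f).prod - (L.map e).prod ∈ I := by
  intro L
  induction L with
  | nil => simp
  | cons a L ih =>
    intro f e h
    simp only [List.map_cons, List.prod_cons]
    have h1 := ih f e (fun q hq => h q (List.mem_cons_of_mem a hq))
    have h2 := h a (List.mem_cons_self (a := a) (l := L))
    have key : f a * (L.map f).prod - e a * (L.map e).prod
        = f a * ((L.map f).prod - (L.map e).prod) + (f a - e a) * (L.map e).prod := by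
      ring
    rw [key]
    exact I.add_mem (I.mul_mem_left _ h1) (I.mul_mem_right _ h2)

/-- Key combinatorial lemma: the product of the error sums along a path lies in the
ideal generated by the overlap relations together with the variables `X_V` with
`V` containing every vertex of the path but `W ⊄ V`. -/
lemma claim (W : Finset (Fin n)) :
    ∀ (l : List (Fin n)) (a : Fin n), l ≠ [] →
      (((a :: l).zip l).map (fun q => Esum n A W q.1 q.2)).prod ∈
        Ideal.span (fam1 n A ∪ Gset n A W (a :: l).toFinset) := by
  intro l
  induction l with
  | nil => intro a h; exact absurd rfl h
  | cons b t ih =>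
    intro a _
    cases t with
    | nil =>
      simp only [List.zip_cons_cons, List.zip_nil_right, List.map_cons, List.map_nil,
        List.prod_cons, List.prod_nil, mul_one]
      rw [Esum]
      apply Ideal.sum_mem
      intro V hV
      simp only [Finset.mem_filter, Finset.mem_univ, true_and] at hV
      apply Ideal.subset_span
      right
      refine ⟨V, ?_, hV.2, rfl⟩
      simp only [List.toFinset_cons, List.toFinset_nil, LawfulSingleton.insert_empty_eq,
        Finset.insert_subset_iff, Finset.singleton_subset_iff]
      exact ⟨hV.1.1, hV.1.2⟩
    | cons d t' =>
      have hrec := ih b (List.cons_ne_nil _ _)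
      simp only [List.zip_cons_cons, List.map_cons, List.prod_cons]
      have hba : b ∈ (b :: d :: t').toFinset := by simp
      refine Submodule.span_induction
        (p := fun z _ => Esum n A W a b * z ∈
          Ideal.span (fam1 n A ∪ Gset n A W (a :: b :: d :: t').toFinset))
        ?_ ?_ ?_ ?_ hrec
      · intro y hy
        rcases hy with hy | hy
        · exact Ideal.mul_mem_left _ _ (Ideal.subset_span (Or.inl hy))
        · obtain ⟨M, hTM, hWM, rfl⟩ := hy
          rw [Esum, Finset.sum_mul]
          apply Ideal.sum_mem
          intro V hV
          simp only [Finset.mem_filter, Finset.mem_univ, true_and] at hV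
          obtain ⟨⟨haV, hbV⟩, hWV⟩ := hV
          have hbM : b ∈ M.1 := hTM hba
          by_cases h1 : V.1 ⊆ M.1
          · apply Ideal.mul_mem_left
            apply Ideal.subset_span
            right
            refine ⟨M, ?_, hWM, rfl⟩
            rw [List.toFinset_cons, Finset.insert_subset_iff]
            exact ⟨h1 haV, hTM⟩
          · by_cases h2 : M.1 ⊆ V.1
            · apply Ideal.mul_mem_right
              apply Ideal.subset_span
              right
              refine ⟨V, ?_, hWV, rfl⟩
              rw [List.toFinset_cons, Finset.insert_subset_iff]
              exact ⟨haV, hTM.trans h2⟩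
            · apply Ideal.subset_span
              left
              refine ⟨V.1, M.1, V.2, M.2, ?_, ?_, ?_, rfl⟩
              · intro h
                have : b ∈ V.1 ∩ M.1 := Finset.mem_inter.mpr ⟨hbV, hbM⟩
                rw [h] at this
                exact absurd this (Finset.notMem_empty b)
              · exact fun h => h1 (Finset.inter_eq_left.mp h)
              · exact fun h => h2 (Finset.inter_eq_right.mp h)
      · simp
      · intro x y _ _ hx hy
        rw [mul_add]
        exact Ideal.add_mem _ hx hy
      · intro r z _ hz
        rw [smul_eq_mul, mul_left_comm]
        exact Ideal.mul_mem_left _ _ hz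

lemma claim' (W : Finset (Fin n)) (l : List (Fin n)) (hlen : 2 ≤ l.length) :
    ((l.zip l.tail).map (fun q => Esum n A W q.1 q.2)).prod ∈
      Ideal.span (fam1 n A ∪ Gset n A W l.toFinset) := by
  match l, hlen with
  | a :: b :: t, _ => exact claim W (b :: t) a (List.cons_ne_nil _ _)

/-- The algebraic decomposition: the product of evaluated polynomials agrees, modulo
the ideal generated by (1),(2),(3), with the product of error sums times something. -/
lemma decomp (J : Finset (Fin n) → Ideal A) (c : Fin n → Fin n → Polynomial A)
    (W : Finset (Fin n)) (l : List (Fin n)) (hnd : l.Nodup) (hW : l.toFinset ⊆ W) :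
    ∃ u : MvPolynomial (FMIdx n) A,
      ((l.zip l.tail).map (fun q => Polynomial.aeval (sumOver n A W) (c q.1 q.2))).prod -
        ((l.zip l.tail).map (fun q => Esum n A W q.1 q.2)).prod * u ∈
        Ideal.span (fam1 n A ∪ fam2 n A J ∪ fam3 n A c) := by
  set I := Ideal.span (fam1 n A ∪ fam2 n A J ∪ fam3 n A c) with hI
  have hfac : ∀ q : Fin n × Fin n, ∃ r, q ∈ l.zip l.tail →
      Polynomial.aeval (sumOver n A W) (c q.1 q.2)
        = Polynomial.aeval (Pij n A q.1 q.2) (c q.1 q.2) - Esum n A W q.1 q.2 * r := by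
    intro q
    by_cases hq : q ∈ l.zip l.tail
    · obtain ⟨hm1, hm2⟩ := zip_mem l q hq
      obtain ⟨r, hr⟩ := factor W q.1 q.2 (hW hm1) (hW hm2) (c q.1 q.2)
      exact ⟨r, fun _ => hr⟩
    · exact ⟨0, fun h => absurd h hq⟩
  choose r hr using hfac
  have hsub : ∀ q ∈ l.zip l.tail,
      (fun q : Fin n × Fin n => Polynomial.aeval (sumOver n A W) (c q.1 q.2)) q -
        (fun q : Fin n × Fin n => Esum n A W q.1 q.2 * (-(r q))) q ∈ I := by
    intro q hq
    have heq : Polynomial.aeval (sumOver n A W) (c q.1 q.2) -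
        Esum n A W q.1 q.2 * (-(r q))
        = Polynomial.aeval (Pij n A q.1 q.2) (c q.1 q.2) := by
      rw [hr q hq]; ring
    rw [heq]
    apply Ideal.subset_span
    exact Or.inr ⟨q.1, q.2, zip_ne l hnd q hq, rfl⟩
  have hps := prod_sub_mem I (l.zip l.tail) _ _ hsub
  refine ⟨((l.zip l.tail).map (fun q => -(r q))).prod, ?_⟩
  have hmul : ((l.zip l.tail).map
        (fun q : Fin n × Fin n => Esum n A W q.1 q.2 * (-(r q)))).prod
      = ((l.zip l.tail).map (fun q => Esum n A W q.1 q.2)).prod *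
        ((l.zip l.tail).map (fun q => -(r q))).prod :=
    List.prod_map_mul
  rwa [hmul] at hps

end Aux

/-- Simplification of Routis's presentation to Fulton–MacPherson's original one:
in `P = A[D_S : S ⊆ {1,…,n}, |S| ≥ 2]`, the ideal generated by the families
(1), (2), (3), (3'), (4) equals the ideal generated by (1), (2), (3) alone. -/
theorem excess_relations_redundant (n : ℕ) (hn : 2 ≤ n) (A : Type*) [CommRing A]
    (J : Finset (Fin n) → Ideal A) (c : Fin n → Fin n → Polynomial A)
    (hsym : ∀ i j : Fin n, i ≠ j → c i j = c j i) :
    Ideal.span (fam1 n A ∪ fam2 n A J ∪ fam3 n A c ∪ fam3' n A c ∪ fam4 n A c) =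
      Ideal.span (fam1 n A ∪ fam2 n A J ∪ fam3 n A c) := by
  classical
  apply le_antisymm
  · rw [Ideal.span_le]
    set I := Ideal.span (fam1 n A ∪ fam2 n A J ∪ fam3 n A c) with hI
    have hf1 : Ideal.span (fam1 n A) ≤ I :=
      Ideal.span_mono (Set.Subset.trans Set.subset_union_left Set.subset_union_left)
    intro p hp
    rcases hp with ((hp | hp) | hp)
    · exact Ideal.subset_span hp
    · -- family (3')
      obtain ⟨l, hnd, hlen, rfl⟩ := hp
      obtain ⟨u, hu⟩ := decomp J c l.toFinset l hnd (Finset.Subset.refl _)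
      have hE : ((l.zip l.tail).map (fun q => Esum n A l.toFinset q.1 q.2)).prod ∈ I := by
        have h1 := claim' (A := A) l.toFinset l hlen
        have h2 : Ideal.span (fam1 n A ∪ Gset n A l.toFinset l.toFinset) ≤ I := by
          rw [Ideal.span_le]
          rintro x (hx | hx)
          · exact hf1 (Ideal.subset_span hx)
          · obtain ⟨V, hV1, hV2, rfl⟩ := hx
            exact absurd hV1 hV2
        exact h2 h1
      have hfin := Ideal.add_mem I hu (Ideal.mul_mem_right u I hE)
      have heq : ((l.zip l.tail).map
            (fun q => Polynomial.aeval (sumOver n A l.toFinset) (c q.1 q.2))).prod -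
            ((l.zip l.tail).map (fun q => Esum n A l.toFinset q.1 q.2)).prod * u +
            ((l.zip l.tail).map (fun q => Esum n A l.toFinset q.1 q.2)).prod * u
          = ((l.zip l.tail).map
            (fun q => Polynomial.aeval (sumOver n A l.toFinset) (c q.1 q.2))).prod := by
        ring
      rwa [heq] at hfin
    · -- family (4)
      obtain ⟨S, hS, l, hnd, hlen, hcard, rfl⟩ := hp
      obtain ⟨u, hu⟩ := decomp J c (S ∪ l.toFinset) l hnd Finset.subset_union_right
      have hXE : MvPolynomial.X (⟨S, hS⟩ : FMIdx n) *
          ((l.zip l.tail).map (fun q => Esum n A (S ∪ l.toFinset) q.1 q.2)).prod ∈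
          Ideal.span (fam1 n A) := by
        refine Submodule.span_induction
          (p := fun z _ => MvPolynomial.X (⟨S, hS⟩ : FMIdx n) * z ∈ Ideal.span (fam1 n A))
          ?_ ?_ ?_ ?_ (claim' (A := A) (S ∪ l.toFinset) l hlen)
        · intro y hy
          rcases hy with hy | hy
          · exact Ideal.mul_mem_left _ _ (Ideal.subset_span hy)
          · obtain ⟨M, hlM, hWM, rfl⟩ := hy
            obtain ⟨x, hx⟩ := Finset.card_eq_one.mp hcard
            have hxm : x ∈ S ∩ l.toFinset := by
              rw [hx]; exact Finset.mem_singleton_self x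
            have hxS : x ∈ S := (Finset.mem_inter.mp hxm).1
            have hxl : x ∈ l.toFinset := (Finset.mem_inter.mp hxm).2
            apply Ideal.subset_span
            refine ⟨S, M.1, hS, M.2, ?_, ?_, ?_, rfl⟩
            · intro h
              have : x ∈ S ∩ M.1 := Finset.mem_inter.mpr ⟨hxS, hlM hxl⟩
              rw [h] at this
              exact absurd this (Finset.notMem_empty x)
            · intro h
              exact hWM (Finset.union_subset (Finset.inter_eq_left.mp h) hlM)
            · intro h
              have hMS : M.1 ⊆ S := Finset.inter_eq_right.mp h
              have hls : l.toFinset ⊆ S := hlM.trans hMS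
              have he : S ∩ l.toFinset = l.toFinset := Finset.inter_eq_right.mpr hls
              rw [he, List.toFinset_card_of_nodup hnd] at hcard
              omega
        · simp
        · intro x y _ _ hx hy
          rw [mul_add]
          exact Ideal.add_mem _ hx hy
        · intro a z _ hz
          rw [smul_eq_mul, mul_left_comm]
          exact Ideal.mul_mem_left _ _ hz
      have h1 : MvPolynomial.X (⟨S, hS⟩ : FMIdx n) *
          (((l.zip l.tail).map
            (fun q => Polynomial.aeval (sumOver n A (S ∪ l.toFinset)) (c q.1 q.2))).prod -
          ((l.zip l.tail).map (fun q => Esum n A (S ∪ l.toFinset) q.1 q.2)).prod * u) ∈ I :=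
        Ideal.mul_mem_left I _ hu
      have h2 : (MvPolynomial.X (⟨S, hS⟩ : FMIdx n) *
          ((l.zip l.tail).map (fun q => Esum n A (S ∪ l.toFinset) q.1 q.2)).prod) * u ∈ I :=
        Ideal.mul_mem_right u I (hf1 hXE)
      have hfin := Ideal.add_mem I h1 h2
      have heq : MvPolynomial.X (⟨S, hS⟩ : FMIdx n) *
          (((l.zip l.tail).map
            (fun q => Polynomial.aeval (sumOver n A (S ∪ l.toFinset)) (c q.1 q.2))).prod -
          ((l.zip l.tail).map (fun q => Esum n A (S ∪ l.toFinset) q.1 q.2)).prod * u) +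
          (MvPolynomial.X (⟨S, hS⟩ : FMIdx n) *
          ((l.zip l.tail).map (fun q => Esum n A (S ∪ l.toFinset) q.1 q.2)).prod) * u
          = MvPolynomial.X (⟨S, hS⟩ : FMIdx n) *
          ((l.zip l.tail).map
            (fun q => Polynomial.aeval (sumOver n A (S ∪ l.toFinset)) (c q.1 q.2))).prod := by
        ring
      rwa [heq] at hfin
  · exact Ideal.span_mono (fun p hp => Or.inl (Or.inl hp))

end
end
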